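/- Hoeffding decomposition of the circular block bootstrap version of a U-statistic (deterministic identity): Let n, l, m ∈ ℕ with l ≥ 2, let x₁,…,x_n ∈ ℝ be extended circularly by x_k = x_{k−n} for k > n, let θ ∈ ℝ, h₁: ℝ → ℝ and h₂: ℝ×ℝ → ℝ be arbitrary functions, and define h(x,y) = θ + h₁(x) + h₁(y) + h₂(x,y). For i = 1,…,n put x̄₁(i) = (2/(l(l−1))) Σ_{i ≤ a < b ≤ i+l−1} h(x_a, x_b). Then for any t₁,…,t_m ∈ {1,…,n}: √(ml)·((1/m) Σ_{j=1}^m x̄₁(t_j) − (1/n) Σ_{i=1}^n x̄₁(i)) = (2/√(ml)) Σ_{j=1}^m [Σ_{k=t_j}^{t_j+l−1} h₁(x_k) − (l/n) Σ_{r=1}^n h₁(x_r)] + (2/(√(ml)(l−1))) Σ_{j=1}^m [Σ_{t_j ≤ a < b ≤ t_j+l−1} h₂(x_a, x_b) − (1/n) Σ_{r=1}^n Σ_{r ≤ a < b ≤ r+l−1} h₂(x_a, x_b)]. -/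

import Mathlib

open Finset

lemma pairsum (g : ℕ → ℝ) (i : ℕ) : ∀ d : ℕ,
    ∑ a ∈ Icc i (i+d), ∑ b ∈ Icc (a+1) (i+d), (g a + g b)
      = d * ∑ k ∈ Icc i (i+d), g k := by
  intro d
  induction d with
  | zero =>
    simp [show Icc (i+1) i = ∅ from Icc_eq_empty (by omega)]
  | succ d ih =>
    rw [show i + (d+1) = (i+d)+1 from rfl]
    rw [Finset.sum_Icc_succ_top (by omega : i ≤ (i+d)+1)]
    rw [show Icc ((i+d)+1+1) ((i+d)+1) = ∅ from Icc_eq_empty (by omega)]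
    rw [Finset.sum_Icc_succ_top (by omega : i ≤ (i+d)+1)]
    have step : ∀ a ∈ Icc i (i+d),
        ∑ b ∈ Icc (a+1) ((i+d)+1), (g a + g b)
          = (∑ b ∈ Icc (a+1) (i+d), (g a + g b)) + (g a + g ((i+d)+1)) := by
      intro a ha
      rw [Finset.sum_Icc_succ_top]
      simp at ha; omega
    rw [Finset.sum_congr rfl step, Finset.sum_add_distrib, ih,
      Finset.sum_add_distrib, Finset.sum_const, Nat.card_Icc]
    simp only [Finset.sum_empty]
    rw [show i + d + 1 - i = d + 1 from by omega]
    push_cast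
    ring

lemma constsum (c : ℝ) (i d : ℕ) :
    ∑ a ∈ Icc i (i+d), ∑ b ∈ Icc (a+1) (i+d), c = (d:ℝ)*((d:ℝ)+1)/2 * c := by
  have hp := pairsum (fun _ => c) i d
  have h2 : ∑ a ∈ Icc i (i+d), ∑ b ∈ Icc (a+1) (i+d), (c + c)
      = 2 * ∑ a ∈ Icc i (i+d), ∑ b ∈ Icc (a+1) (i+d), c := by
    simp only [Finset.sum_add_distrib]; ring
  rw [h2] at hp
  rw [Finset.sum_const, Nat.card_Icc, show i + d + 1 - i = d + 1 from by omega] at hp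
  simp only [nsmul_eq_mul] at hp
  push_cast at hp
  linarith

lemma shift1 (g : ℕ → ℝ) (n : ℕ) (hn : 1 ≤ n) (hper : ∀ k, 1 ≤ k → g (k+n) = g k) :
    ∑ i ∈ Icc 1 n, g (i+1) = ∑ i ∈ Icc 1 n, g i := by
  have hmap : ∑ i ∈ Icc 1 n, g (i+1) = ∑ j ∈ Icc 2 (n+1), g j := by
    rw [show Icc 2 (n+1) = (Icc 1 n).map (addRightEmbedding 1) from by
      rw [Finset.map_add_right_Icc]]
    rw [Finset.sum_map]
    rfl
  have hsplit : Icc 1 (n+1) = insert 1 (Icc 2 (n+1)) := by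
    ext k; simp [Finset.mem_Icc]; omega
  have h1 : (1:ℕ) ∉ Icc 2 (n+1) := by simp
  have e1 : ∑ j ∈ Icc 1 (n+1), g j = g 1 + ∑ j ∈ Icc 2 (n+1), g j := by
    rw [hsplit, Finset.sum_insert h1]
  have e2 : ∑ j ∈ Icc 1 (n+1), g j = (∑ j ∈ Icc 1 n, g j) + g (n+1) := by
    rw [Finset.sum_Icc_succ_top (by omega)]
  have e3 : g (n+1) = g 1 := by
    have := hper 1 le_rfl; rw [← this]; ring_nf
  rw [hmap]
  have := e1.symm.trans e2
  linarith [this]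

lemma shiftd (g : ℕ → ℝ) (n : ℕ) (hn : 1 ≤ n) (hper : ∀ k, 1 ≤ k → g (k+n) = g k) :
    ∀ d : ℕ, ∑ i ∈ Icc 1 n, g (i+d) = ∑ i ∈ Icc 1 n, g i := by
  intro d
  induction d with
  | zero => simp
  | succ d ih =>
    have := shift1 (fun k => g (k+d)) n hn (by
      intro k hk
      rw [show k + n + d = k + d + n from by ring, hper (k+d) (by omega)])
    calc ∑ i ∈ Icc 1 n, g (i+(d+1)) = ∑ i ∈ Icc 1 n, g ((i+1)+d) := by
          apply Finset.sum_congr rfl; intro i _; congr 1; ring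
      _ = ∑ i ∈ Icc 1 n, g (i+d) := this
      _ = _ := ih

lemma circsum (g : ℕ → ℝ) (n : ℕ) (hn : 1 ≤ n) (hper : ∀ k, 1 ≤ k → g (k+n) = g k)
    (d : ℕ) : ∑ i ∈ Icc 1 n, ∑ k ∈ Icc i (i+d), g k = (d+1 : ℝ) * ∑ r ∈ Icc 1 n, g r := by
  induction d with
  | zero => simp
  | succ d ih =>
    have step : ∀ i ∈ Icc 1 n, ∑ k ∈ Icc i (i+(d+1)), g k
        = (∑ k ∈ Icc i (i+d), g k) + g (i+(d+1)) := by
      intro i _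
      rw [show i + (d+1) = (i+d)+1 from rfl, Finset.sum_Icc_succ_top (by omega)]
    rw [Finset.sum_congr rfl step, Finset.sum_add_distrib, ih,
      shiftd g n hn hper (d+1)]
    push_cast; ring

/-- **Hoeffding decomposition of the circular block bootstrap version of a U-statistic**
(deterministic identity): if `h(x,y) = θ + h₁(x) + h₁(y) + h₂(x,y)`, the sample
`x₁, …, x_n` is extended circularly (`x_k = x_{k-n}` for `k > n`), and
`x̄₁(i) = (2/(l(l-1))) Σ_{i ≤ a < b ≤ i+l-1} h(x_a, x_b)`, then for all
`t₁, …, t_m ∈ {1, …, n}`: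
`√(ml)((1/m) Σ_j x̄₁(t_j) - (1/n) Σ_i x̄₁(i))
  = (2/√(ml)) Σ_j [Σ_{k=t_j}^{t_j+l-1} h₁(x_k) - (l/n) Σ_{r=1}^n h₁(x_r)]
  + (2/(√(ml)(l-1))) Σ_j [Σ_{t_j ≤ a < b ≤ t_j+l-1} h₂(x_a, x_b)
      - (1/n) Σ_{r=1}^n Σ_{r ≤ a < b ≤ r+l-1} h₂(x_a, x_b)]`. -/
theorem circular_bootstrap_hoeffding_decomposition
    (n l m : ℕ) (hn : 1 ≤ n) (hl : 2 ≤ l)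
    (x : ℕ → ℝ) (hcirc : ∀ k, n < k → x k = x (k - n))
    (θ : ℝ) (h₁ : ℝ → ℝ) (h₂ : ℝ → ℝ → ℝ) (h : ℝ → ℝ → ℝ)
    (hdef : ∀ a b : ℝ, h a b = θ + h₁ a + h₁ b + h₂ a b)
    (xbar : ℕ → ℝ)
    (hxbar : ∀ i, xbar i = 2 / ((l : ℝ) * ((l : ℝ) - 1)) *
      ∑ a ∈ Finset.Icc i (i + l - 1), ∑ b ∈ Finset.Icc (a + 1) (i + l - 1), h (x a) (x b))
    (t : Fin m → ℕ) (ht : ∀ j, t j ∈ Finset.Icc 1 n) :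
    Real.sqrt ((m : ℝ) * (l : ℝ)) *
        ((1 / (m : ℝ)) * ∑ j : Fin m, xbar (t j)
          - (1 / (n : ℝ)) * ∑ i ∈ Finset.Icc 1 n, xbar i)
      = 2 / Real.sqrt ((m : ℝ) * (l : ℝ)) *
          ∑ j : Fin m, (∑ k ∈ Finset.Icc (t j) (t j + l - 1), h₁ (x k)
            - (l : ℝ) / (n : ℝ) * ∑ r ∈ Finset.Icc 1 n, h₁ (x r))
        + 2 / (Real.sqrt ((m : ℝ) * (l : ℝ)) * ((l : ℝ) - 1)) *
          ∑ j : Fin m,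
            (∑ a ∈ Finset.Icc (t j) (t j + l - 1),
                ∑ b ∈ Finset.Icc (a + 1) (t j + l - 1), h₂ (x a) (x b)
              - (1 / (n : ℝ)) * ∑ r ∈ Finset.Icc 1 n,
                  ∑ a ∈ Finset.Icc r (r + l - 1),
                    ∑ b ∈ Finset.Icc (a + 1) (r + l - 1), h₂ (x a) (x b)) := by
  rcases Nat.eq_zero_or_pos m with hm | hm
  · subst hm
    simp
  obtain ⟨d, rfl⟩ : ∃ d, l = d + 1 := ⟨l - 1, by omega⟩
  have hd : 1 ≤ d := by omega
  have hn' : (0:ℝ) < n := by exact_mod_cast hn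
  have hm' : (0:ℝ) < m := by exact_mod_cast hm
  have hdR : (0:ℝ) < d := by exact_mod_cast hd
  simp only [show ∀ i:ℕ, i + (d+1) - 1 = i + d from fun i => by omega] at hxbar ⊢
  have hper : ∀ k, 1 ≤ k → h₁ (x (k+n)) = h₁ (x k) := by
    intro k hk
    rw [hcirc (k+n) (by omega)]
    congr 2
    omega
  -- xbar formula
  have hx : ∀ i, xbar i = θ + 2/((d:ℝ)+1) * (∑ k ∈ Icc i (i+d), h₁ (x k))
      + 2/(((d:ℝ)+1)*(d:ℝ)) *
        (∑ a ∈ Icc i (i+d), ∑ b ∈ Icc (a+1) (i+d), h₂ (x a) (x b)) := by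
    intro i
    rw [hxbar i]
    have hp := pairsum (fun k => h₁ (x k)) i d
    have e : ∀ a ∈ Icc i (i+d), ∑ b ∈ Icc (a+1) (i+d), h (x a) (x b)
        = (∑ b ∈ Icc (a+1) (i+d), θ)
          + (∑ b ∈ Icc (a+1) (i+d), (h₁ (x a) + h₁ (x b)))
          + (∑ b ∈ Icc (a+1) (i+d), h₂ (x a) (x b)) := by
      intro a _
      rw [← Finset.sum_add_distrib, ← Finset.sum_add_distrib]
      exact Finset.sum_congr rfl fun b _ => by rw [hdef]; ring
    rw [Finset.sum_congr rfl e, Finset.sum_add_distrib, Finset.sum_add_distrib,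
      hp, constsum θ i d]
    push_cast
    have h1 : ((d:ℝ)+1) ≠ 0 := by positivity
    have h2 : (d:ℝ) ≠ 0 := hdR.ne'
    field_simp
    have h3 : (d:ℝ) * (d:ℝ)⁻¹ = 1 := mul_inv_cancel₀ h2
    linear_combination (2 * (∑ a ∈ Icc i (i+d), ∑ b ∈ Icc (a+1) (i+d), h₂ (x a) (x b))
      + (d:ℝ)*θ + 2*(d:ℝ)*(∑ k ∈ Icc i (i+d), h₁ (x k)) + (d:ℝ)^2*θ) * h3
  -- circular sum of S₁
  have hsumS1 : ∑ i ∈ Icc 1 n, (∑ k ∈ Icc i (i+d), h₁ (x k))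
      = ((d:ℝ)+1) * ∑ r ∈ Icc 1 n, h₁ (x r) := by
    have := circsum (fun k => h₁ (x k)) n hn hper d
    simpa using this
  simp only [hx, Finset.sum_add_distrib, Finset.sum_sub_distrib, ← Finset.mul_sum,
    Finset.sum_const, Finset.card_univ, Fintype.card_fin, Nat.card_Icc,
    Nat.add_sub_cancel, nsmul_eq_mul, hsumS1]
  set M := Real.sqrt ((m:ℝ) * ((d:ℕ)+1 : ℕ)) with hMdef
  have hM2 : M * M = (m:ℝ) * ((d:ℝ)+1) := by
    rw [hMdef, Real.mul_self_sqrt (by positivity)]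
    push_cast; ring
  have hM : 0 < M := by
    rw [hMdef]
    apply Real.sqrt_pos.2
    push_cast
    positivity
  push_cast
  rw [show ((d:ℝ)+1-1) = (d:ℝ) from by ring]
  have e1 : 2/M = 2*M/((m:ℝ)*((d:ℝ)+1)) := by
    rw [div_eq_div_iff hM.ne' (by positivity)]
    linear_combination (-2)*hM2
  have e2 : 2/(M*(d:ℝ)) = 2*M/((m:ℝ)*((d:ℝ)+1)*(d:ℝ)) := by
    rw [div_eq_div_iff (by positivity) (by positivity)]
    linear_combination (-2)*(d:ℝ)*hM2
  rw [e1, e2]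
  field_simp
  ring
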